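/- Context length lemma: let G' = (V', E') be a path graph and X a nonempty pattern string over Σ \ {#, $}. Then there exists a length m (depending on G' and X) such that find(X) consists exactly of all nodes v' ∈ V' for which the prefix X[0, m−1] of X is a prefix of key(v'). -/

import Mathlib

open List

/-- Two strings prefix-match if one is a prefix of the other. -/
def PrefixMatch {α : Type*} (s t : List α) : Prop := s <+: t ∨ t <+: s

/-- A set of strings is prefix-free if no two distinct members prefix-match. -/
def PrefixFree {α : Type*} (K : Set (List α)) : Prop :=
  ∀ s ∈ K, ∀ t ∈ K, s ≠ t → ¬ PrefixMatch s t

/-- String `K` occurs at position `i` of the annotated sequence `s`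
(an element of a `k`-collection, pairing each character with the graph node
at that position). -/
def OccAt {α ν : Type*} (s : List (α × ν)) (i : ℕ) (K : List α) : Prop :=
  i + K.length ≤ s.length ∧ ((s.drop i).take K.length).map Prod.fst = K

/-- An order-`k` path graph built from a `k`-collection `seqs` of annotated
sequences (labels of maximal paths, padded with `#^k` in front and `$^k`
behind, each position annotated with the corresponding node), together with a
prefix-free key set `keys` of substrings of length at most `k` such that every
right-maximal substring of the collection prefix-matches some key and
`$^k` is a key. -/
structure PathGraph (α ν : Type*) (k : ℕ) (hash dollar : α) where
  seqs : Set (List (α × ν))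
  keys : Set (List α)
  key_nonempty : ∀ K ∈ keys, K ≠ []
  key_short : ∀ K ∈ keys, K.length ≤ k
  prefixFree : PrefixFree keys
  keys_occur : ∀ K ∈ keys, ∃ s ∈ seqs, ∃ i, OccAt s i K
  suffixes_covered : ∀ s ∈ seqs, ∀ i < s.length,
      ∃ K ∈ keys, PrefixMatch K ((s.drop i).map Prod.fst)
  dollar_key : List.replicate k dollar ∈ keys
  begins_hash : ∀ s ∈ seqs, (s.map Prod.fst).take k = List.replicate k hash
  ends_dollar : ∀ s ∈ seqs,
      (s.map Prod.fst).drop (s.length - k) = List.replicate k dollar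
  no_other_special : ∀ s ∈ seqs, ∀ i, k ≤ i → i < s.length - k →
      ∀ h : i < s.length, (s.get ⟨i, h⟩).1 ≠ hash ∧ (s.get ⟨i, h⟩).1 ≠ dollar

namespace PathGraph

variable {α ν : Type*} [Inhabited α] {k : ℕ} {hash dollar : α}

/-- The value set of a key: the nodes at positions where the key occurs. -/
def value (G : PathGraph α ν k hash dollar) (K : List α) : Set ν :=
  { v | ∃ s ∈ G.seqs, ∃ i, OccAt s i K ∧ ∃ h : i < s.length, (s.get ⟨i, h⟩).2 = v }

/-- Edges of the path graph: `(K, K')` is an edge when the string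
`K[0]·K'` occurs in the collection and prefix-matches `K`. -/
def Edge (G : PathGraph α ν k hash dollar) (K K' : List α) : Prop :=
  K ∈ G.keys ∧ K' ∈ G.keys ∧
  (∃ s ∈ G.seqs, ∃ i, OccAt s i (K.headI :: K')) ∧
  PrefixMatch K (K.headI :: K')

/-- `find X`: the set of keys that are start nodes of paths of the path graph
whose label (concatenation of first characters of the keys) is `X`. -/
def find (G : PathGraph α ν k hash dollar) (X : List α) : Set (List α) :=
  { K | ∃ P : List (List α), P.Chain' G.Edge ∧ (∀ K' ∈ P, K' ∈ G.keys) ∧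
      P.map (fun K' => K'.headI) = X ∧ P.headI = K }

/-- `locate X`: the union of the value sets of the keys matching `X`. -/
def locate (G : PathGraph α ν k hash dollar) (X : List α) : Set ν :=
  ⋃ K ∈ G.find X, G.value K

/-- A path graph is the order-`k` de Bruijn graph of its collection when its
keys are exactly the `k`-mers occurring in the collection. -/
def IsDeBruijn (G : PathGraph α ν k hash dollar) : Prop :=
  G.keys = { K | K.length = k ∧ ∃ s ∈ G.seqs, ∃ i, OccAt s i K }

/-- Two path graphs are `k`-equivalent if `locate` agrees on all patterns of
length between `1` and `k` over `Σ \ {#, $}`. -/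
def KEquiv (G G' : PathGraph α ν k hash dollar) : Prop :=
  ∀ X : List α, X ≠ [] → X.length ≤ k →
    (∀ c ∈ X, c ≠ hash ∧ c ≠ dollar) → G.locate X = G'.locate X

/-- An order-`k` pruned de Bruijn graph: a path graph `k`-equivalent to the
order-`k` de Bruijn graph of the same collection. -/
def IsPrunedDeBruijn (G : PathGraph α ν k hash dollar) : Prop :=
  ∃ D : PathGraph α ν k hash dollar,
    D.seqs = G.seqs ∧ D.IsDeBruijn ∧ G.KEquiv D

/-- The pruning lemma is applicable: there is a nonempty string `K` that is a
proper prefix of at least one key, such that all keys having `K` as a proper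
prefix have identical value sets. -/
def CanPrune (G : PathGraph α ν k hash dollar) : Prop :=
  ∃ K : List α, K ≠ [] ∧
    (∃ K' ∈ G.keys, K <+: K' ∧ K ≠ K') ∧
    (∀ K₁ ∈ G.keys, K <+: K₁ → K ≠ K₁ →
      ∀ K₂ ∈ G.keys, K <+: K₂ → K ≠ K₂ → G.value K₁ = G.value K₂)

/-- A maximally pruned de Bruijn graph: a pruned de Bruijn graph to which the
pruning lemma cannot be applied any further. -/
def MaximallyPruned (G : PathGraph α ν k hash dollar) : Prop :=
  G.IsPrunedDeBruijn ∧ ¬ G.CanPrune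

end PathGraph


set_option linter.unusedSectionVars false
set_option linter.unnecessarySimpa false

section Aux

variable {α ν : Type*} [Inhabited α] {k : ℕ} {hash dollar : α}

lemma k_pos (G : PathGraph α ν k hash dollar) : k ≠ 0 := by
  intro h
  subst h
  exact G.key_nonempty [] (by simpa using G.dollar_key) rfl

lemma seq_len (G : PathGraph α ν k hash dollar) {s : List (α × ν)} (hs : s ∈ G.seqs) :
    k ≤ s.length := by
  have h := congrArg List.length (G.begins_hash s hs)
  simp at h
  omega

lemma suffix_cons (s : List (α × ν)) (i : ℕ) (hi : i < s.length) :
    (s.drop i).map Prod.fst = (s[i]'hi).1 :: (s.drop (i+1)).map Prod.fst := by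
  rw [List.drop_eq_getElem_cons hi, List.map_cons]

lemma pos_lt (G : PathGraph α ν k hash dollar) {s : List (α × ν)} (hs : s ∈ G.seqs)
    {i : ℕ} (hi : i < s.length) (hd : (s[i]'hi).1 ≠ dollar) : i + k < s.length := by
  by_contra h
  apply hd
  have hlen := seq_len G hs
  have h1 : (s.map Prod.fst).drop i = List.replicate (s.length - i) dollar := by
    have h2 := G.ends_dollar s hs
    have h3 : (s.map Prod.fst).drop i
        = ((s.map Prod.fst).drop (s.length - k)).drop (i - (s.length - k)) := by
      rw [List.drop_drop]
      congr 1
      omega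
    rw [h3, h2, List.drop_replicate]
    congr 1
    omega
  have h5 : (s.drop i).map Prod.fst = List.replicate (s.length - i) dollar := by
    rw [List.map_drop]; exact h1
  rw [suffix_cons s i hi] at h5
  have h6 : s.length - i = (s.length - i - 1) + 1 := by omega
  rw [h6, List.replicate_succ] at h5
  exact (List.cons.injEq _ _ _ _).mp h5 |>.1

lemma overshoot (G : PathGraph α ν k hash dollar) {s : List (α × ν)}
    {i : ℕ} (hik : i + k ≤ s.length) {K : List α} (hK : K ∈ G.keys)
    (h : PrefixMatch K ((s.drop i).map Prod.fst)) : K <+: (s.drop i).map Prod.fst := by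
  rcases h with h | h
  · exact h
  · have h2 : K.length ≤ ((s.drop i).map Prod.fst).length := by
      have := G.key_short K hK
      simp only [List.length_map, List.length_drop]
      omega
    rw [h.eq_of_length_le h2]

lemma key_prefix_eq (G : PathGraph α ν k hash dollar) {K₁ K₂ : List α}
    (h1 : K₁ ∈ G.keys) (h2 : K₂ ∈ G.keys) (h : K₁ <+: K₂) : K₁ = K₂ := by
  by_contra hne
  exact G.prefixFree K₁ h1 K₂ h2 hne (Or.inl h)

lemma occAt_iff_prefix {s : List (α × ν)} {i : ℕ} {K : List α} (hK : K ≠ []) :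
    OccAt s i K ↔ K <+: (s.drop i).map Prod.fst := by
  constructor
  · rintro ⟨h1, h2⟩
    have h3 : ((s.drop i).map Prod.fst).take K.length = K := by
      rw [← List.map_take]; exact h2
    have h4 : ((s.drop i).map Prod.fst).take K.length <+: (s.drop i).map Prod.fst :=
      List.take_prefix _ _
    rwa [h3] at h4
  · rintro ⟨t, ht⟩
    have hlen : K.length + t.length = s.length - i := by
      have := congrArg List.length ht
      simpa using this
    have hKlen : K.length ≠ 0 := by simpa using hK
    refine ⟨by omega, ?_⟩
    have h4 : ((s.drop i).map Prod.fst).take K.length = K := by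
      rw [← ht]
      exact List.take_left
    rw [List.map_take]
    exact h4

lemma single_prefix {x : α} {K L : List α} (hK : K ≠ []) (h1 : [x] <+: L)
    (h2 : K <+: L) : [x] <+: K := by
  rcases K with _ | ⟨a, t⟩
  · exact absurd rfl hK
  · rcases L with _ | ⟨b, u⟩
    · simpa using h1
    · rw [List.cons_prefix_cons] at h1 h2
      exact List.cons_prefix_cons.mpr ⟨h1.1.trans h2.1.symm, by simp⟩

lemma headI_of_single_prefix {x : α} {K : List α} (h : [x] <+: K) : K.headI = x := by
  obtain ⟨t, rfl⟩ := h
  rfl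

lemma single_prefix_of_headI {x : α} {K : List α} (hK : K ≠ []) (h : K.headI = x) :
    [x] <+: K := by
  rcases K with _ | ⟨a, t⟩
  · exact absurd rfl hK
  · exact List.cons_prefix_cons.mpr ⟨h.symm, by simp⟩

lemma find_singleton (G : PathGraph α ν k hash dollar) (x : α) :
    G.find [x] = {K | K ∈ G.keys ∧ [x] <+: K} := by
  ext K
  simp only [PathGraph.find, Set.mem_setOf_eq]
  constructor
  · rintro ⟨P, hchain, hkeys, hmap, hhead⟩
    rcases P with _ | ⟨a, P'⟩
    · simp at hmap
    · rw [List.map_cons] at hmap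
      injection hmap with h1 h2
      rcases P' with _ | ⟨b, P''⟩
      swap
      · simp at h2
      · have hK : a = K := hhead
        subst hK
        have hak : a ∈ G.keys := hkeys a (by simp)
        exact ⟨hak, single_prefix_of_headI (G.key_nonempty a hak) h1⟩
  · rintro ⟨hkeys, hpre⟩
    have hh := headI_of_single_prefix hpre
    exact ⟨[K], List.isChain_singleton _, by simpa using hkeys, by simp [hh], rfl⟩

lemma mem_find_cons (G : PathGraph α ν k hash dollar) {x : α} {Y : List α}
    (hY : Y ≠ []) {K : List α} :
    K ∈ G.find (x :: Y) ↔
      K ∈ G.keys ∧ K.headI = x ∧ ∃ K' ∈ G.find Y, G.Edge K K' := by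
  constructor
  · rintro ⟨P, hchain, hkeysP, hmap, hhead⟩
    rcases P with _ | ⟨K₀, P'⟩
    · simp at hmap
    · rw [List.map_cons] at hmap
      injection hmap with h1 h2
      rcases P' with _ | ⟨K₁, P''⟩
      · rw [List.map_nil] at h2
        exact absurd h2.symm hY
      · have hK : K₀ = K := hhead
        subst hK
        refine ⟨hkeysP K₀ (by simp), h1, K₁,
          ⟨K₁ :: P'', (List.isChain_cons_cons.mp hchain).2,
            fun K'' h => hkeysP K'' (List.mem_cons_of_mem _ h), h2, rfl⟩,
          (List.isChain_cons_cons.mp hchain).1⟩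
  · rintro ⟨hK, hhx, K', ⟨P', hchain', hkeys', hmap', hhead'⟩, hedge⟩
    rcases P' with _ | ⟨K₁, P''⟩
    · rw [List.map_nil] at hmap'
      exact absurd hmap'.symm hY
    · have hK1 : K₁ = K' := hhead'
      subst hK1
      refine ⟨K :: K₁ :: P'', List.isChain_cons_cons.mpr ⟨hedge, hchain'⟩, ?_,
        by simp [List.map_cons, hmap', hhx], rfl⟩
      rintro K'' h
      rcases List.mem_cons.mp h with rfl | h
      · exact hK
      · exact hkeys' _ h

lemma mem_find_of_prefix (G : PathGraph α ν k hash dollar) :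
    ∀ X : List α, X ≠ [] → (∀ c ∈ X, c ≠ dollar) →
      ∀ s ∈ G.seqs, ∀ i, X <+: (s.drop i).map Prod.fst →
        ∀ K ∈ G.keys, K <+: (s.drop i).map Prod.fst → K ∈ G.find X := by
  intro X
  induction X with
  | nil => intro h; exact absurd rfl h
  | cons x Y ih =>
    intro _ hc s hs i hXpre K hKkeys hKpre
    have hKne : K ≠ [] := G.key_nonempty K hKkeys
    have hi : i < s.length := by
      have := hXpre.length_le
      simp only [List.length_map, List.length_drop, List.length_cons] at this
      omega
    have hxpre1 : [x] <+: (s.drop i).map Prod.fst := by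
      obtain ⟨t, ht⟩ := hXpre
      exact ⟨Y ++ t, by simpa using ht⟩
    have hsx : (s[i]'hi).1 = x := by
      rw [suffix_cons s i hi] at hxpre1
      exact ((List.cons_prefix_cons.mp hxpre1).1).symm
    have hKx : [x] <+: K := single_prefix hKne hxpre1 hKpre
    have hKh : K.headI = x := headI_of_single_prefix hKx
    rcases Y with _ | ⟨y, Y'⟩
    · rw [find_singleton]
      exact ⟨hKkeys, hKx⟩
    · have hxd : x ≠ dollar := hc x (by simp)
      have hik : i + k < s.length := pos_lt G hs hi (by rw [hsx]; exact hxd)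
      have hk0 : k ≠ 0 := k_pos G
      have hi1 : i + 1 < s.length := by omega
      obtain ⟨K₁, hK₁keys, hK₁pm⟩ := G.suffixes_covered s hs (i+1) hi1
      have hK₁pre : K₁ <+: (s.drop (i+1)).map Prod.fst :=
        overshoot G (by omega) hK₁keys hK₁pm
      have hYpre : (y :: Y') <+: (s.drop (i+1)).map Prod.fst := by
        rw [suffix_cons s i hi] at hXpre
        exact (List.cons_prefix_cons.mp hXpre).2
      have hK₁find := ih (by simp) (fun c hc' => hc c (List.mem_cons_of_mem _ hc'))
        s hs (i+1) hYpre K₁ hK₁keys hK₁pre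
      have hocc : x :: K₁ <+: (s.drop i).map Prod.fst := by
        rw [suffix_cons s i hi]
        exact List.cons_prefix_cons.mpr ⟨hsx.symm, hK₁pre⟩
      refine (mem_find_cons G (by simp)).mpr ⟨hKkeys, hKh, K₁, hK₁find, ?_⟩
      refine ⟨hKkeys, hK₁keys, ⟨s, hs, i, ?_⟩, ?_⟩
      · rw [hKh]
        exact (occAt_iff_prefix (by simp)).mpr hocc
      · rw [hKh]
        exact prefix_or_prefix_of_prefix hKpre hocc

end Aux


lemma context_length_aux
    {α ν : Type*} [Inhabited α] {k : ℕ} {hash dollar : α}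
    (G' : PathGraph α ν k hash dollar) :
    ∀ X : List α, X ≠ [] → (∀ c ∈ X, c ≠ dollar) →
      ∃ m ≤ X.length, G'.find X = { K | K ∈ G'.keys ∧ X.take m <+: K } := by
  intro X
  induction X with
  | nil => intro h; exact absurd rfl h
  | cons x Y ih =>
    intro _ hc
    rcases Y with _ | ⟨y, Y'⟩
    · refine ⟨1, by simp, ?_⟩
      rw [find_singleton]
      simp
    · have hYne : (y :: Y') ≠ [] := List.cons_ne_nil _ _
      have hcY : ∀ c ∈ (y :: Y'), c ≠ dollar := fun c hc' => hc c (List.mem_cons_of_mem _ hc')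
      obtain ⟨m', hm', hfindY⟩ := ih hYne hcY
      have hxd : x ≠ dollar := hc x (by simp)
      have hxV : [x] <+: x :: (y :: Y').take m' := List.cons_prefix_cons.mpr ⟨rfl, by simp⟩
      by_cases hA : G'.find (x :: y :: Y') = ∅
      · refine ⟨(x :: y :: Y').length, le_refl _, ?_⟩
        rw [hA]
        ext K
        simp only [Set.mem_empty_iff_false, Set.mem_setOf_eq, false_iff, not_and]
        intro hKkeys hpre
        rw [List.take_length] at hpre
        obtain ⟨s, hs, i, hocc⟩ := G'.keys_occur K hKkeys
        have hKpre : K <+: (s.drop i).map Prod.fst :=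
          (occAt_iff_prefix (G'.key_nonempty K hKkeys)).mp hocc
        have hmem : K ∈ G'.find (x :: y :: Y') :=
          mem_find_of_prefix G' _ (List.cons_ne_nil _ _) hc s hs i
            (hpre.trans hKpre) K hKkeys hKpre
        rw [hA] at hmem
        exact hmem
      · obtain ⟨K₀, hK₀⟩ := Set.nonempty_iff_ne_empty.mpr hA
        obtain ⟨hK₀keys, hK₀head, K'₀, hK'₀find, hK₀edge⟩ := (mem_find_cons G' hYne).mp hK₀
        have hK'₀W : K'₀ ∈ G'.keys ∧ (y :: Y').take m' <+: K'₀ := by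
          rw [hfindY] at hK'₀find; exact hK'₀find
        obtain ⟨hK'₀keys, hWK'₀⟩ := hK'₀W
        obtain ⟨_, _, ⟨s₀, hs₀, i₀, hocc₀⟩, hpm₀⟩ := hK₀edge
        rw [hK₀head] at hocc₀ hpm₀
        have hVc : (x :: (y :: Y').take m') <+: (x :: K'₀) :=
          List.cons_prefix_cons.mpr ⟨rfl, hWK'₀⟩
        by_cases hP : ∃ KP ∈ G'.keys, KP <+: x :: (y :: Y').take m'
        · obtain ⟨KP, hKPkeys, hKPpre⟩ := hP
          have hKPne := G'.key_nonempty KP hKPkeys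
          have hVX : (x :: (y :: Y').take m') <+: (x :: y :: Y') :=
            List.cons_prefix_cons.mpr ⟨rfl, List.take_prefix _ _⟩
          have hKPX : KP <+: (x :: y :: Y') := hKPpre.trans hVX
          have htake : (x :: y :: Y').take KP.length = KP :=
            (List.prefix_iff_eq_take.mp hKPX).symm
          refine ⟨KP.length, hKPX.length_le, ?_⟩
          rw [htake]
          ext K
          simp only [Set.mem_setOf_eq]
          constructor
          · intro hKfind
            obtain ⟨hKkeys, hKhead, K', hK'find, hKedge⟩ := (mem_find_cons G' hYne).mp hKfind
            have hK'W : (y :: Y').take m' <+: K' := by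
              rw [hfindY] at hK'find; exact hK'find.2
            obtain ⟨_, _, _, hpm⟩ := hKedge
            rw [hKhead] at hpm
            have hKPc : KP <+: (x :: K') :=
              hKPpre.trans (List.cons_prefix_cons.mpr ⟨rfl, hK'W⟩)
            have hKeq : K = KP := by
              rcases hpm with hpm | hpm
              · rcases prefix_or_prefix_of_prefix hpm hKPc with h | h
                · exact key_prefix_eq G' hKkeys hKPkeys h
                · exact (key_prefix_eq G' hKPkeys hKkeys h).symm
              · exact (key_prefix_eq G' hKPkeys hKkeys (hKPc.trans hpm)).symm
            exact ⟨hKkeys, by rw [hKeq]⟩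
          · rintro ⟨hKkeys, hKP_K⟩
            have hKeq : KP = K := key_prefix_eq G' hKPkeys hKkeys hKP_K
            subst hKeq
            have hh : KP.headI = x :=
              headI_of_single_prefix (single_prefix hKPne hxV hKPpre)
            refine (mem_find_cons G' hYne).mpr
              ⟨hKPkeys, hh, K'₀, hK'₀find, hKPkeys, hK'₀keys, ⟨s₀, hs₀, i₀, ?_⟩, ?_⟩
            · rw [hh]; exact hocc₀
            · rw [hh]; exact Or.inl (hKPpre.trans hVc)
        · refine ⟨m' + 1, by simpa using Nat.succ_le_succ hm', ?_⟩
          have htakeV : (x :: y :: Y').take (m' + 1) = x :: (y :: Y').take m' :=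
            List.take_succ_cons
          rw [htakeV]
          ext K
          simp only [Set.mem_setOf_eq]
          constructor
          · intro hKfind
            obtain ⟨hKkeys, hKhead, K', hK'find, hKedge⟩ := (mem_find_cons G' hYne).mp hKfind
            have hK'W : (y :: Y').take m' <+: K' := by
              rw [hfindY] at hK'find; exact hK'find.2
            obtain ⟨_, _, _, hpm⟩ := hKedge
            rw [hKhead] at hpm
            have hVc' : (x :: (y :: Y').take m') <+: x :: K' :=
              List.cons_prefix_cons.mpr ⟨rfl, hK'W⟩
            refine ⟨hKkeys, ?_⟩
            rcases hpm with hpm | hpm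
            · rcases prefix_or_prefix_of_prefix hpm hVc' with h | h
              · exact absurd ⟨K, hKkeys, h⟩ hP
              · exact h
            · exact hVc'.trans hpm
          · rintro ⟨hKkeys, hVK⟩
            obtain ⟨s, hs, i, hocc⟩ := G'.keys_occur K hKkeys
            have hKne := G'.key_nonempty K hKkeys
            have hKpre : K <+: (s.drop i).map Prod.fst := (occAt_iff_prefix hKne).mp hocc
            have hxK : [x] <+: K := hxV.trans hVK
            have hi : i < s.length := by
              have h1 := hKpre.length_le
              have h2 := hxK.length_le
              simp only [List.length_map, List.length_drop] at h1
              simp only [List.length_singleton] at h2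
              omega
            have hsx : (s[i]'hi).1 = x := by
              have hx2 := hxK.trans hKpre
              rw [suffix_cons s i hi] at hx2
              exact ((List.cons_prefix_cons.mp hx2).1).symm
            have hik : i + k < s.length := pos_lt G' hs hi (by rw [hsx]; exact hxd)
            have hk0 : k ≠ 0 := k_pos G'
            obtain ⟨K₁, hK₁keys, hK₁pm⟩ := G'.suffixes_covered s hs (i+1) (by omega)
            have hK₁pre : K₁ <+: (s.drop (i+1)).map Prod.fst :=
              overshoot G' (by omega) hK₁keys hK₁pm
            have hWsuf : (y :: Y').take m' <+: (s.drop (i+1)).map Prod.fst := by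
              have hv2 := hVK.trans hKpre
              rw [suffix_cons s i hi] at hv2
              exact (List.cons_prefix_cons.mp hv2).2
            have hWK₁ : (y :: Y').take m' <+: K₁ := by
              rcases prefix_or_prefix_of_prefix hWsuf hK₁pre with h | h
              · exact h
              · have he := key_prefix_eq G' hK₁keys hK'₀keys (h.trans hWK'₀)
                rw [he]; exact hWK'₀
            have hK₁find : K₁ ∈ G'.find (y :: Y') := by
              rw [hfindY]; exact ⟨hK₁keys, hWK₁⟩
            have hoccx : x :: K₁ <+: (s.drop i).map Prod.fst := by
              rw [suffix_cons s i hi]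
              exact List.cons_prefix_cons.mpr ⟨hsx.symm, hK₁pre⟩
            have hKhead : K.headI = x := headI_of_single_prefix hxK
            refine (mem_find_cons G' hYne).mpr
              ⟨hKkeys, hKhead, K₁, hK₁find, hKkeys, hK₁keys, ⟨s, hs, i, ?_⟩, ?_⟩
            · rw [hKhead]
              exact (occAt_iff_prefix (List.cons_ne_nil _ _)).mpr hoccx
            · rw [hKhead]
              exact prefix_or_prefix_of_prefix hKpre hoccx

/-- **Context length** (Lemma 2): for a path graph `G'` and a nonempty pattern
`X` over `Σ \ {#, $}`, there is a context length `m` (depending on the graph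
and the pattern) such that `find X` consists exactly of the keys having
`X[0, m−1]` as a prefix. -/
theorem context_length
    {α ν : Type*} [Inhabited α] {k : ℕ} {hash dollar : α}
    (G' : PathGraph α ν k hash dollar)
    (X : List α) (hX : X ≠ []) (hXc : ∀ c ∈ X, c ≠ hash ∧ c ≠ dollar) :
    ∃ m ≤ X.length,
      G'.find X = { K | K ∈ G'.keys ∧ X.take m <+: K } :=
  context_length_aux G' X hX (fun c hc => (hXc c hc).2)
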